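/- Let a, b, m, n be positive integers with gcd(a,b) = 1 and gcd(m,n) = 1, let p be an odd prime and e ≥ 1 an integer such that p^e divides both a² − b² and m² − n². Then p^e divides gcd(am + bn, an + bm) or p^e divides gcd(|am − bn|, |an − bm|). -/

import Mathlib

lemma split_dvd (x y : ℤ) (p : ℕ) (hp : p.Prime) (hp2 : p ≠ 2) (e : ℕ)
    (hcop : Int.gcd x y = 1) (h : (p : ℤ) ^ e ∣ x ^ 2 - y ^ 2) :
    (p : ℤ) ^ e ∣ x - y ∨ (p : ℤ) ^ e ∣ x + y := by
  have hpp : Prime ((p : ℤ)) := Int.prime_iff_natAbs_prime.mpr (by simpa using hp)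
  have hmul : x ^ 2 - y ^ 2 = (x - y) * (x + y) := by ring
  rw [hmul] at h
  by_cases h1 : (p : ℤ) ∣ x - y
  · by_cases h2 : (p : ℤ) ∣ x + y
    · exfalso
      have hx : (p : ℤ) ∣ 2 * x := by
        have := dvd_add h1 h2; rw [show x - y + (x + y) = 2 * x by ring] at this; exact this
      have hy : (p : ℤ) ∣ 2 * y := by
        have := dvd_sub h2 h1; rw [show x + y - (x - y) = 2 * y by ring] at this; exact this
      have hp2' : ¬ (p : ℤ) ∣ 2 := by
        intro hd
        have hle : (p:ℤ) ≤ 2 := Int.le_of_dvd (by norm_num) hd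
        have h2le : 2 ≤ p := hp.two_le
        have : p = 2 := by omega
        exact hp2 this
      have hx' : (p : ℤ) ∣ x := (hpp.dvd_mul.mp hx).resolve_left hp2'
      have hy' : (p : ℤ) ∣ y := (hpp.dvd_mul.mp hy).resolve_left hp2'
      have : (p : ℤ) ∣ (Int.gcd x y : ℤ) := Int.dvd_coe_gcd hx' hy'
      rw [hcop] at this
      exact hpp.not_dvd_one (by exact_mod_cast this)
    · left
      have hc : IsCoprime ((p : ℤ) ^ e) (x + y) :=
        ((hpp.coprime_iff_not_dvd).mpr h2).pow_left
      exact hc.dvd_of_dvd_mul_right h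
  · right
    have hc : IsCoprime ((p : ℤ) ^ e) (x - y) :=
      ((hpp.coprime_iff_not_dvd).mpr h1).pow_left
    exact hc.dvd_of_dvd_mul_left h

/-- If an odd prime power `p^e` (with `e ≥ 1`) divides both `a² − b²` and
`m² − n²`, then it divides `g₊ = gcd(am+bn, an+bm)` or
`g₋ = gcd(|am−bn|, |an−bm|)`. -/
theorem stmt_9 (a b m n : ℤ)
    (ha : 0 < a) (hb : 0 < b) (hm : 0 < m) (hn : 0 < n)
    (hcop_ab : Int.gcd a b = 1) (hcop_mn : Int.gcd m n = 1)
    (p : ℕ) (hp : p.Prime) (hp2 : p ≠ 2) (e : ℕ) (he : 1 ≤ e)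
    (hdvd1 : (p : ℤ) ^ e ∣ a ^ 2 - b ^ 2)
    (hdvd2 : (p : ℤ) ^ e ∣ m ^ 2 - n ^ 2) :
    (p : ℤ) ^ e ∣ (Int.gcd (a * m + b * n) (a * n + b * m) : ℤ) ∨
    (p : ℤ) ^ e ∣ (Int.gcd (a * m - b * n) (a * n - b * m) : ℤ) := by
  rcases split_dvd a b p hp hp2 e hcop_ab hdvd1 with h1 | h1 <;>
  rcases split_dvd m n p hp hp2 e hcop_mn hdvd2 with h2 | h2
  · right
    refine Int.dvd_coe_gcd ?_ ?_
    · have : a * m - b * n = m * (a - b) + b * (m - n) := by ring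
      rw [this]; exact dvd_add (h1.mul_left m) (h2.mul_left b)
    · have : a * n - b * m = n * (a - b) - b * (m - n) := by ring
      rw [this]; exact dvd_sub (h1.mul_left n) (h2.mul_left b)
  · left
    refine Int.dvd_coe_gcd ?_ ?_
    · have : a * m + b * n = m * (a - b) + b * (m + n) := by ring
      rw [this]; exact dvd_add (h1.mul_left m) (h2.mul_left b)
    · have : a * n + b * m = n * (a - b) + b * (m + n) := by ring
      rw [this]; exact dvd_add (h1.mul_left n) (h2.mul_left b)
  · left
    refine Int.dvd_coe_gcd ?_ ?_
    · have : a * m + b * n = m * (a + b) - b * (m - n) := by ring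
      rw [this]; exact dvd_sub (h1.mul_left m) (h2.mul_left b)
    · have : a * n + b * m = n * (a + b) + b * (m - n) := by ring
      rw [this]; exact dvd_add (h1.mul_left n) (h2.mul_left b)
  · right
    refine Int.dvd_coe_gcd ?_ ?_
    · have : a * m - b * n = m * (a + b) - b * (m + n) := by ring
      rw [this]; exact dvd_sub (h1.mul_left m) (h2.mul_left b)
    · have : a * n - b * m = n * (a + b) - b * (n + m) := by ring
      rw [this]
      have h2' : (p:ℤ)^e ∣ n + m := by rwa [add_comm]
      exact dvd_sub (h1.mul_left n) (h2'.mul_left b)
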